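/- Let {aₙ} be a sequence of nonnegative reals and a ≥ 0 with (aₙ^{p-1} - a^{p-1})(aₙ - a) → 0 as n → ∞, where p > 1. Then aₙ → a. -/
import Mathlib


open Filter

theorem stmt4 (p : ℝ) (hp : 1 < p) (a : ℕ → ℝ) (ha : ∀ n, 0 ≤ a n) (L : ℝ) (hL : 0 ≤ L)
    (h : Tendsto (fun n => ((a n) ^ (p - 1) - L ^ (p - 1)) * (a n - L)) atTop (nhds 0)) :
    Tendsto a atTop (nhds L) := by
  set q := p - 1 with hqdef
  have hq : 0 < q := by simp [hqdef]; linarith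
  rw [Metric.tendsto_atTop] at h ⊢
  intro ε hε
  set δ : ℝ := ε * min ((L + ε) ^ q - L ^ q)
      (if ε ≤ L then L ^ q - (L - ε) ^ q else 1) with hδdef
  have hδ : 0 < δ := by
    apply mul_pos hε
    apply lt_min
    · have := Real.rpow_lt_rpow hL (by linarith : L < L + ε) hq
      linarith
    · split_ifs with hc
      · have := Real.rpow_lt_rpow (by linarith : (0:ℝ) ≤ L - ε)
          (by linarith : L - ε < L) hq
        linarith
      · exact one_pos
  have key : ∀ x : ℝ, 0 ≤ x → ε ≤ |x - L| → δ ≤ (x ^ q - L ^ q) * (x - L) := by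
    intro x hx habs
    rcases le_abs.mp habs with hcase | hcase
    · -- x - L ≥ ε, so x ≥ L + ε
      have hx1 : L + ε ≤ x := by linarith
      have h1 : (L + ε) ^ q ≤ x ^ q :=
        Real.rpow_le_rpow (by linarith) hx1 (le_of_lt hq)
      have h2 : L ^ q < (L + ε) ^ q := Real.rpow_lt_rpow hL (by linarith) hq
      have : δ ≤ ε * ((L + ε) ^ q - L ^ q) := by
        rw [hδdef]
        exact mul_le_mul_of_nonneg_left (min_le_left _ _) (le_of_lt hε)
      calc δ ≤ ε * ((L + ε) ^ q - L ^ q) := this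
        _ ≤ (x ^ q - L ^ q) * (x - L) := by
            rw [mul_comm]
            apply mul_le_mul (by linarith) (by linarith) (le_of_lt hε) (by linarith)
    · -- -(x - L) ≥ ε, so x ≤ L - ε, and x ≥ 0 so ε ≤ L
      have hx1 : x ≤ L - ε := by linarith
      have hεL : ε ≤ L := by linarith
      have h1 : x ^ q ≤ (L - ε) ^ q :=
        Real.rpow_le_rpow hx hx1 (le_of_lt hq)
      have h2 : (L - ε) ^ q < L ^ q :=
        Real.rpow_lt_rpow (by linarith) (by linarith) hq
      have : δ ≤ ε * (L ^ q - (L - ε) ^ q) := by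
        rw [hδdef]
        refine mul_le_mul_of_nonneg_left ?_ (le_of_lt hε)
        rw [if_pos hεL] at *
        exact min_le_right _ _
      calc δ ≤ ε * (L ^ q - (L - ε) ^ q) := this
        _ ≤ (L ^ q - x ^ q) * (L - x) := by
            rw [mul_comm]
            apply mul_le_mul (by linarith) (by linarith) (le_of_lt hε) (by linarith)
        _ = (x ^ q - L ^ q) * (x - L) := by ring
  obtain ⟨N, hN⟩ := h δ hδ
  refine ⟨N, fun n hn => ?_⟩
  by_contra hcon
  have hge : ε ≤ |a n - L| := not_lt.mp (by simpa [Real.dist_eq] using hcon)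
  have h1 := key (a n) (ha n) hge
  have h2 := hN n hn
  rw [Real.dist_eq, sub_zero] at h2
  have := le_abs_self ((a n ^ q - L ^ q) * (a n - L))
  linarith
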